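/- Under unconfoundedness of the control outcome (Y(0) ⫫ A ∣ X) and e(X) < 1 a.s. with P(A=1) > 0, the average treatment effect on the treated satisfies τ_ATT = E[Y(1) − Y(0) ∣ A = 1] = ( E[AY] − E[(1−A)·Y·e(X)/(1−e(X))] ) / E[e(X)]. -/

import Mathlib

open MeasureTheory Filter ProbabilityTheory



lemma condIndepFun_congr_left' {Ω : Type*} {m : MeasurableSpace Ω} [mΩ : MeasurableSpace Ω]
    [StandardBorelSpace Ω]
    {μ : Measure Ω} [IsProbabilityMeasure μ] (hm : m ≤ mΩ)
    {f f' g : Ω → ℝ} (h : CondIndepFun m hm f g μ) (hff' : f =ᵐ[μ] f') :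
    CondIndepFun m hm f' g μ := by
  refine Kernel.IndepFun.congr' h ?_ (ae_of_all _ fun a => EventuallyEq.rfl)
  obtain ⟨N, hsub, hNmeas, hN0⟩ :=
    exists_measurable_superset_of_null (ae_iff.mp hff' : μ {ω | ¬ f ω = f' ω} = 0)
  have h1 : ∀ᵐ a ∂μ, (condExpKernel μ m a N).toReal = (μ⟦N|m⟧) a :=
    condExpKernel_ae_eq_condExp hm hNmeas
  have h2 : (μ⟦N|m⟧) =ᵐ[μ] 0 := by
    have : (N.indicator (fun _ => (1:ℝ))) =ᵐ[μ] 0 := by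
      filter_upwards [measure_eq_zero_iff_ae_notMem.mp hN0] with a ha
      simp [Set.indicator_of_notMem ha]
    calc (μ⟦N|m⟧) =ᵐ[μ] μ[(0:Ω → ℝ)|m] := condExp_congr_ae this
    _ = 0 := condExp_zero
  have h3 : ∀ᵐ a ∂μ, condExpKernel μ m a N = 0 := by
    filter_upwards [h1, h2] with a ha hb
    have hfin : condExpKernel μ m a N ≠ ⊤ := measure_ne_top _ _
    have : (condExpKernel μ m a N).toReal = 0 := by rw [ha, hb]; rfl
    exact (ENNReal.toReal_eq_zero_iff _).mp this |>.resolve_right hfin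
  have hSmeas : MeasurableSet[m] {a | condExpKernel μ m a N = 0} :=
    measurable_condExpKernel hNmeas (measurableSet_singleton 0)
  have h4 : ∀ᵐ a ∂(μ.trim hm), condExpKernel μ m a N = 0 := by
    rw [ae_iff]
    have : {a | ¬ condExpKernel μ m a N = 0} = {a | condExpKernel μ m a N = 0}ᶜ := rfl
    rw [this, trim_measurableSet_eq hm hSmeas.compl]
    exact ae_iff.mp h3
  filter_upwards [h4] with a ha
  exact measure_mono_null hsub ha


lemma condexp_sup_comap_eq {Ω : Type*} {m n : MeasurableSpace Ω} [mΩ : MeasurableSpace Ω]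
    [StandardBorelSpace Ω] {μ : Measure Ω} [IsProbabilityMeasure μ] (hm : m ≤ mΩ)
    {A e Z : Ω → ℝ} (hA : Measurable A) (hA01 : ∀ ω, A ω = 0 ∨ A ω = 1)
    (hZ : Measurable Z)
    (he : StronglyMeasurable[m] e) (heB : ∀ᵐ ω ∂μ, |e ω| ≤ 1)
    (hcondA : μ[A|m] =ᵐ[μ] e)
    (hindep : CondIndepFun m hm Z A μ)
    (hn_def : n = m ⊔ MeasurableSpace.comap Z inferInstance) :
    μ[A | n] =ᵐ[μ] e := by
  have hZcomap : MeasurableSpace.comap Z inferInstance ≤ mΩ := hZ.comap_le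
  have hn : n ≤ mΩ := hn_def ▸ sup_le hm hZcomap
  have hmn : m ≤ n := hn_def ▸ le_sup_left
  -- A as an indicator
  have hAeq : A = (A ⁻¹' {1}).indicator (fun _ => (1:ℝ)) := by
    funext ω
    rcases hA01 ω with h0 | h1
    · simp [Set.indicator_of_notMem, h0, Set.mem_preimage]
    · simp [h1, Set.indicator_of_mem, Set.mem_preimage]
  have intA : Integrable A μ := by
    rw [hAeq]
    exact (integrable_const (1:ℝ)).indicator (hA (measurableSet_singleton 1))
  have inte : Integrable e μ := by
    refine Integrable.mono' (integrable_const (1:ℝ)) ((he.mono hm).aestronglyMeasurable) ?_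
    filter_upwards [heB] with ω hω using by simpa using hω
  have htot : ∫ ω, A ω ∂μ = ∫ ω, e ω ∂μ := by
    rw [← integral_condExp hm (f := A)]
    exact integral_congr_ae hcondA
  -- condexp of indicator of A⁻¹'{1} w.r.t. m is e
  have hindA : (μ⟦A ⁻¹' {1}|m⟧) =ᵐ[μ] e := by
    have h : (A ⁻¹' {1}).indicator (fun _ => (1:ℝ)) = A := hAeq.symm
    rw [h]; exact hcondA
  -- the generating π-system
  have h_eq : n = MeasurableSpace.generateFrom
      {t | ∃ s u, MeasurableSet[m] s ∧ MeasurableSet[MeasurableSpace.comap Z inferInstance] u ∧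
        t = s ∩ u} := by
    rw [hn_def]
    refine le_antisymm (sup_le ?_ ?_) (MeasurableSpace.generateFrom_le ?_)
    · intro s hs
      exact MeasurableSpace.measurableSet_generateFrom
        ⟨s, Set.univ, hs, MeasurableSet.univ, (Set.inter_univ s).symm⟩
    · intro u hu
      exact MeasurableSpace.measurableSet_generateFrom
        ⟨Set.univ, u, MeasurableSet.univ, hu, (Set.univ_inter u).symm⟩
    · rintro t ⟨s, u, hs, hu, rfl⟩
      have h1 : m ≤ m ⊔ MeasurableSpace.comap Z inferInstance := le_sup_left
      have h2 : MeasurableSpace.comap Z inferInstance ≤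
          m ⊔ MeasurableSpace.comap Z inferInstance := le_sup_right
      exact (h1 s hs).inter (h2 u hu)
  have h_pi : IsPiSystem
      {t | ∃ s u, MeasurableSet[m] s ∧ MeasurableSet[MeasurableSpace.comap Z inferInstance] u ∧
        t = s ∩ u} := by
    rintro t1 ⟨s1, u1, hs1, hu1, rfl⟩ t2 ⟨s2, u2, hs2, hu2, rfl⟩ -
    refine ⟨s1 ∩ s2, u1 ∩ u2, hs1.inter hs2, hu1.inter hu2, ?_⟩
    rw [Set.inter_inter_inter_comm]
  -- set integral equality on the π-system extends
  have hsetint : ∀ t, MeasurableSet[n] t → ∫ ω in t, A ω ∂μ = ∫ ω in t, e ω ∂μ := by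
    have hbasic : ∀ t ∈ {t | ∃ s u, MeasurableSet[m] s ∧
        MeasurableSet[MeasurableSpace.comap Z inferInstance] u ∧ t = s ∩ u},
        ∫ ω in t, A ω ∂μ = ∫ ω in t, e ω ∂μ := by
      rintro t ⟨s, u, hs, hu, rfl⟩
      have hu' : MeasurableSet u := hZcomap u hu
      have hs' : MeasurableSet s := hm s hs
      obtain ⟨B, hB, rfl⟩ := hu
      have hprod := (condIndepFun_iff_condExp_inter_preimage_eq_mul (hm' := hm)
        hZ hA).mp hindep B {1} hB (measurableSet_singleton 1)
      -- LHS
      have l1 : ∫ ω in s ∩ Z ⁻¹' B, A ω ∂μ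
          = ∫ ω in s, ((Z ⁻¹' B ∩ A ⁻¹' {1}).indicator (fun _ => (1:ℝ))) ω ∂μ := by
        rw [← setIntegral_indicator hu']
        refine setIntegral_congr_fun hs' (fun ω _ => ?_)
        rcases hA01 ω with h0 | h1
        · by_cases hωu : ω ∈ Z ⁻¹' B <;>
            simp [Set.indicator_of_notMem, Set.indicator_of_mem, hωu, h0, Set.mem_inter_iff,
              Set.mem_preimage]
        · by_cases hωu : ω ∈ Z ⁻¹' B <;>
            simp [Set.indicator_of_notMem, Set.indicator_of_mem, hωu, h1, Set.mem_inter_iff,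
              Set.mem_preimage]
      have l2 : ∫ ω in s, ((Z ⁻¹' B ∩ A ⁻¹' {1}).indicator (fun _ => (1:ℝ))) ω ∂μ
          = ∫ ω in s, (μ⟦Z ⁻¹' B ∩ A ⁻¹' {1}|m⟧) ω ∂μ :=
        (setIntegral_condExp hm
          ((integrable_const (1:ℝ)).indicator
            (hu'.inter (hA (measurableSet_singleton 1)))) hs).symm
      have l3 : ∫ ω in s, (μ⟦Z ⁻¹' B ∩ A ⁻¹' {1}|m⟧) ω ∂μ
          = ∫ ω in s, (μ⟦Z ⁻¹' B|m⟧) ω * e ω ∂μ := by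
        refine integral_congr_ae (ae_restrict_of_ae ?_)
        filter_upwards [hprod, hindA] with ω h1 h2
        rw [h1, h2]
      -- RHS
      have r1 : ∫ ω in s ∩ Z ⁻¹' B, e ω ∂μ
          = ∫ ω in s, ((Z ⁻¹' B).indicator e) ω ∂μ := by
        rw [setIntegral_indicator hu']
      have hinde : Integrable ((Z ⁻¹' B).indicator e) μ := inte.indicator hu'
      have r2 : ∫ ω in s, ((Z ⁻¹' B).indicator e) ω ∂μ
          = ∫ ω in s, (μ[(Z ⁻¹' B).indicator e|m]) ω ∂μ :=
        (setIntegral_condExp hm hinde hs).symm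
      have hpull : (μ[(Z ⁻¹' B).indicator e|m]) =ᵐ[μ]
          fun ω => e ω * (μ⟦Z ⁻¹' B|m⟧) ω := by
        have hmul : (Z ⁻¹' B).indicator e
            = e * ((Z ⁻¹' B).indicator (fun _ => (1:ℝ))) := by
          funext ω
          by_cases hω : ω ∈ Z ⁻¹' B <;>
            simp [Set.indicator_of_mem, Set.indicator_of_notMem, hω]
        rw [hmul]
        exact condExp_mul_of_stronglyMeasurable_left he (by rw [← hmul]; exact hinde)
          ((integrable_const (1:ℝ)).indicator hu')
      have r3 : ∫ ω in s, (μ[(Z ⁻¹' B).indicator e|m]) ω ∂μ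
          = ∫ ω in s, (μ⟦Z ⁻¹' B|m⟧) ω * e ω ∂μ := by
        refine integral_congr_ae (ae_restrict_of_ae ?_)
        filter_upwards [hpull] with ω hω
        rw [hω, mul_comm]
      rw [l1, l2, l3, r1, r2, r3]
    refine MeasurableSpace.induction_on_inter (m := n) h_eq h_pi ?_ hbasic ?_ ?_
    · simp
    · intro t htn ht
      have htn' : MeasurableSet t := hn t htn
      have h1 := integral_add_compl htn' intA
      have h2 := integral_add_compl htn' inte
      rw [← htot] at h2
      linarith
    · intro f hdisj hfn hf
      have hf' : ∀ i, MeasurableSet (f i) := fun i => hn _ (hfn i)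
      rw [integral_iUnion hf' hdisj intA.integrableOn,
        integral_iUnion hf' hdisj inte.integrableOn]
      exact tsum_congr hf
  -- conclude
  refine (ae_eq_condExp_of_forall_setIntegral_eq hn intA ?_ ?_ ?_).symm
  · exact fun s _ _ => inte.integrableOn
  · exact fun s hs _ => (hsetint s hs).symm
  · exact (he.mono hmn).aestronglyMeasurable


theorem att_identification {Ω : Type*} [mΩ : MeasurableSpace Ω] [StandardBorelSpace Ω]
    (μ : Measure Ω) [IsProbabilityMeasure μ]
    (X : Ω → ℝ) (hX : Measurable X)
    (A Y1 Y0 e : Ω → ℝ)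
    (hA : Measurable A) (hA01 : ∀ ω, A ω = 0 ∨ A ω = 1)
    (hY1 : Integrable Y1 μ) (hY0 : Integrable Y0 μ)
    (hmX : MeasurableSpace.comap X inferInstance ≤ mΩ)
    (hunconf0 : CondIndepFun (MeasurableSpace.comap X inferInstance) hmX Y0 A μ)
    (he : StronglyMeasurable[MeasurableSpace.comap X inferInstance] e)
    (heB : ∀ᵐ ω ∂μ, 0 < e ω ∧ e ω < 1)
    (hcondA : μ[A|MeasurableSpace.comap X inferInstance] =ᵐ[μ] e)
    (hAprob : 0 < μ {ω | A ω = 1})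
    (hint : Integrable (fun ω =>
      (1 - A ω) * (A ω * Y1 ω + (1 - A ω) * Y0 ω) * e ω / (1 - e ω)) μ) :
    (∫ ω in {ω | A ω = 1}, (Y1 ω - Y0 ω) ∂μ) / (μ {ω | A ω = 1}).toReal =
      ((∫ ω, A ω * (A ω * Y1 ω + (1 - A ω) * Y0 ω) ∂μ) -
          ∫ ω, (1 - A ω) * (A ω * Y1 ω + (1 - A ω) * Y0 ω) * e ω / (1 - e ω) ∂μ) /
        (∫ ω, e ω ∂μ) := by
  -- measurable modification of Y0
  obtain ⟨Y0', hY0'sm, hY0'eq⟩ : ∃ Y0', StronglyMeasurable Y0' ∧ Y0 =ᵐ[μ] Y0' :=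
    ⟨hY0.1.mk Y0, hY0.1.stronglyMeasurable_mk, hY0.1.ae_eq_mk⟩
  have hY0'M : Measurable Y0' := hY0'sm.measurable
  have hY0'int : Integrable Y0' μ := hY0.congr hY0'eq
  have hunconf' : CondIndepFun (MeasurableSpace.comap X inferInstance) hmX Y0' A μ :=
    condIndepFun_congr_left' hmX hunconf0 hY0'eq
  have heB' : ∀ᵐ ω ∂μ, |e ω| ≤ 1 := by
    filter_upwards [heB] with ω ⟨h1, h2⟩
    rw [abs_le]; constructor <;> linarith
  have hAn : μ[A | MeasurableSpace.comap X inferInstance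
      ⊔ MeasurableSpace.comap Y0' inferInstance] =ᵐ[μ] e :=
    condexp_sup_comap_eq hmX hA hA01 hY0'M he heB' hcondA hunconf' rfl
  have hn : MeasurableSpace.comap X inferInstance
      ⊔ MeasurableSpace.comap Y0' inferInstance ≤ mΩ := sup_le hmX hY0'M.comap_le
  have hmn : MeasurableSpace.comap X inferInstance ≤ MeasurableSpace.comap X inferInstance
      ⊔ MeasurableSpace.comap Y0' inferInstance := le_sup_left
  have hY0'n : StronglyMeasurable[MeasurableSpace.comap X inferInstance
      ⊔ MeasurableSpace.comap Y0' inferInstance] Y0' :=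
    ((measurable_iff_comap_le.mpr le_rfl : Measurable[MeasurableSpace.comap Y0' inferInstance]
      Y0').stronglyMeasurable).mono le_sup_right
  -- basic integrability
  have hAeq : A = (A ⁻¹' {1}).indicator (fun _ => (1:ℝ)) := by
    funext ω
    rcases hA01 ω with h0 | h1
    · simp [Set.indicator_of_notMem, h0, Set.mem_preimage]
    · simp [h1, Set.indicator_of_mem, Set.mem_preimage]
  have intA : Integrable A μ := by
    rw [hAeq]
    exact (integrable_const (1:ℝ)).indicator (hA (measurableSet_singleton 1))
  have hAbs : ∀ ω, |A ω| ≤ 1 := by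
    intro ω; rcases hA01 ω with h | h <;> simp [h]
  have hint1 : Integrable (fun ω => Y0' ω * A ω) μ := by
    refine Integrable.mono' hY0'int.abs
      ((hY0'sm.mul (hA.stronglyMeasurable)).aestronglyMeasurable) (ae_of_all _ fun ω => ?_)
    rw [Real.norm_eq_abs, abs_mul]
    calc |Y0' ω| * |A ω| ≤ |Y0' ω| * 1 := by
          exact mul_le_mul_of_nonneg_left (hAbs ω) (abs_nonneg _)
    _ = |Y0' ω| := mul_one _
  -- key identity 1 : ∫ A * Y0' = ∫ Y0' * e
  have key1 : ∫ ω, A ω * Y0' ω ∂μ = ∫ ω, Y0' ω * e ω ∂μ := by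
    have hpull1 : μ[Y0' * A | MeasurableSpace.comap X inferInstance
        ⊔ MeasurableSpace.comap Y0' inferInstance] =ᵐ[μ]
        Y0' * μ[A | MeasurableSpace.comap X inferInstance
        ⊔ MeasurableSpace.comap Y0' inferInstance] :=
      condExp_mul_of_stronglyMeasurable_left hY0'n hint1 intA
    calc ∫ ω, A ω * Y0' ω ∂μ = ∫ ω, Y0' ω * A ω ∂μ := by
          simp_rw [mul_comm]
    _ = ∫ ω, (μ[Y0' * A | MeasurableSpace.comap X inferInstance
        ⊔ MeasurableSpace.comap Y0' inferInstance]) ω ∂μ :=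
          (integral_condExp hn (f := Y0' * A)).symm
    _ = ∫ ω, Y0' ω * e ω ∂μ := by
          refine integral_congr_ae ?_
          filter_upwards [hpull1, hAn] with ω h1 h2
          rw [h1]; simp only [Pi.mul_apply, h2]
  -- key identity 2
  have hcond1A : μ[(fun ω => 1 - A ω) | MeasurableSpace.comap X inferInstance
      ⊔ MeasurableSpace.comap Y0' inferInstance] =ᵐ[μ] fun ω => 1 - e ω := by
    have h1 := condExp_sub (m := MeasurableSpace.comap X inferInstance
      ⊔ MeasurableSpace.comap Y0' inferInstance) (μ := μ) (integrable_const (1:ℝ)) intA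
    have h2 : μ[(fun _ => (1:ℝ)) | MeasurableSpace.comap X inferInstance
        ⊔ MeasurableSpace.comap Y0' inferInstance] = fun _ => (1:ℝ) := condExp_const hn 1
    filter_upwards [h1, hAn] with ω hω h2'
    rw [show (fun ω => 1 - A ω) = (fun _ => (1:ℝ)) - A from rfl, hω]
    simp [h2, h2']
  have key2 : ∫ ω, (1 - A ω) * (A ω * Y1 ω + (1 - A ω) * Y0 ω) * e ω / (1 - e ω) ∂μ
      = ∫ ω, Y0' ω * e ω ∂μ := by
    have hhn : StronglyMeasurable[MeasurableSpace.comap X inferInstance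
        ⊔ MeasurableSpace.comap Y0' inferInstance] (fun ω => Y0' ω * (e ω / (1 - e ω))) :=
      hY0'n.mul (((he.measurable.div (measurable_const.sub he.measurable)).stronglyMeasurable).mono hmn)
    have haeq : (fun ω => (1 - A ω) * (A ω * Y1 ω + (1 - A ω) * Y0 ω) * e ω / (1 - e ω))
        =ᵐ[μ] fun ω => (Y0' ω * (e ω / (1 - e ω))) * (1 - A ω) := by
      filter_upwards [hY0'eq] with ω hω
      rcases hA01 ω with h0 | h1
      · simp [h0, ← hω, mul_div_assoc]
      · simp [h1]
    have hint2 : Integrable (fun ω => (Y0' ω * (e ω / (1 - e ω))) * (1 - A ω)) μ :=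
      hint.congr haeq
    have int1A : Integrable (fun ω => 1 - A ω) μ := (integrable_const (1:ℝ)).sub intA
    have hpull2 : μ[(fun ω => Y0' ω * (e ω / (1 - e ω))) * (fun ω => 1 - A ω)
        | MeasurableSpace.comap X inferInstance ⊔ MeasurableSpace.comap Y0' inferInstance]
        =ᵐ[μ] (fun ω => Y0' ω * (e ω / (1 - e ω))) *
          μ[(fun ω => 1 - A ω) | MeasurableSpace.comap X inferInstance
            ⊔ MeasurableSpace.comap Y0' inferInstance] :=
      condExp_mul_of_stronglyMeasurable_left hhn hint2 int1A
    calc ∫ ω, (1 - A ω) * (A ω * Y1 ω + (1 - A ω) * Y0 ω) * e ω / (1 - e ω) ∂μ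
        = ∫ ω, (Y0' ω * (e ω / (1 - e ω))) * (1 - A ω) ∂μ := integral_congr_ae haeq
    _ = ∫ ω, (μ[(fun ω => Y0' ω * (e ω / (1 - e ω))) * (fun ω => 1 - A ω)
        | MeasurableSpace.comap X inferInstance ⊔ MeasurableSpace.comap Y0' inferInstance]) ω ∂μ :=
          (integral_condExp hn).symm
    _ = ∫ ω, Y0' ω * e ω ∂μ := by
          refine integral_congr_ae ?_
          filter_upwards [hpull2, hcond1A, heB] with ω h1 h2 ⟨hb1, hb2⟩
          rw [h1]
          simp only [Pi.mul_apply, h2]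
          have hne : (1:ℝ) - e ω ≠ 0 := by linarith
          field_simp
    -- done
  -- numerator pieces
  have hsetmeas : MeasurableSet {ω | A ω = 1} := by
    have : {ω | A ω = 1} = A ⁻¹' {1} := by ext ω; simp
    rw [this]; exact hA (measurableSet_singleton 1)
  have E1 : ∫ ω, A ω * (A ω * Y1 ω + (1 - A ω) * Y0 ω) ∂μ
      = ∫ ω in {ω | A ω = 1}, Y1 ω ∂μ := by
    have h : (fun ω => A ω * (A ω * Y1 ω + (1 - A ω) * Y0 ω))
        = ({ω | A ω = 1}).indicator Y1 := by
      funext ω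
      rcases hA01 ω with h0 | h1
      · simp [h0, Set.indicator_of_notMem, Set.mem_setOf_eq]
      · simp [h1, Set.indicator_of_mem, Set.mem_setOf_eq]
    rw [h, integral_indicator hsetmeas]
  have E0 : ∫ ω in {ω | A ω = 1}, Y0 ω ∂μ = ∫ ω, Y0' ω * e ω ∂μ := by
    rw [← key1, ← integral_indicator hsetmeas]
    refine integral_congr_ae ?_
    filter_upwards [hY0'eq] with ω hω
    rcases hA01 ω with h0 | h1
    · simp [h0, Set.indicator_of_notMem, Set.mem_setOf_eq]
    · simp [h1, Set.indicator_of_mem, Set.mem_setOf_eq, hω]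
  have Eden : ∫ ω, e ω ∂μ = (μ {ω | A ω = 1}).toReal := by
    have htot : ∫ ω, e ω ∂μ = ∫ ω, A ω ∂μ := by
      rw [← integral_condExp hmX (f := A)]
      exact (integral_congr_ae hcondA).symm
    rw [htot]
    have h : A = ({ω | A ω = 1}).indicator (fun _ => (1:ℝ)) := by
      funext ω
      rcases hA01 ω with h0 | h1
      · simp [h0, Set.indicator_of_notMem, Set.mem_setOf_eq]
      · simp [h1, Set.indicator_of_mem, Set.mem_setOf_eq]
    conv_lhs => rw [h]
    rw [integral_indicator hsetmeas, setIntegral_const, smul_eq_mul, mul_one]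
    rfl
  have Enum : ∫ ω in {ω | A ω = 1}, (Y1 ω - Y0 ω) ∂μ
      = (∫ ω in {ω | A ω = 1}, Y1 ω ∂μ) - ∫ ω in {ω | A ω = 1}, Y0 ω ∂μ :=
    integral_sub hY1.integrableOn hY0.integrableOn
  rw [Enum, E1, key2, ← E0, Eden]
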